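/- The rewrite relation on self-join-free Boolean conjunctive queries terminates: there is no infinite sequence q0 ⇝ q1 ⇝ q2 ⇝ … of rewrite steps in which each step produces a query different from its predecessor. -/

import Mathlib

/-- An atom of a self-join-free Boolean conjunctive query: a relation symbol together
with its set of variables, marked endogenous (`endo = true`) or exogenous. -/
structure QAtom (Rel Var : Type) where
  rel : Rel
  vars : Finset Var
  endo : Bool
deriving DecidableEq

variable {Rel Var : Type} [DecidableEq Rel] [DecidableEq Var]

/-- The set `Var(q)` of variables of a query. -/
def qVars (q : Finset (QAtom Rel Var)) : Finset Var := q.sup (·.vars)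

/-- `sg q x` is the set of atoms of `q` containing the variable `x`. -/
def sg (q : Finset (QAtom Rel Var)) (x : Var) : Finset (QAtom Rel Var) :=
  q.filter (fun g => x ∈ g.vars)

/-- `q` is self-join-free: no relation symbol occurs in two distinct atoms. -/
def selfJoinFree (q : Finset (QAtom Rel Var)) : Prop :=
  ∀ g ∈ q, ∀ g' ∈ q, g.rel = g'.rel → g = g'

/-- `q` is linear: its atoms admit a total order in which, for every variable `x`,
the atoms containing `x` are consecutive (the endogenous/exogenous marking is ignored). -/
def isLinear (q : Finset (QAtom Rel Var)) : Prop :=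
  ∃ f : QAtom Rel Var → ℕ, Set.InjOn f q ∧
    ∀ (x : Var), ∀ g₁ ∈ q, ∀ g₂ ∈ q, ∀ g₃ ∈ q,
      f g₁ ≤ f g₂ → f g₂ ≤ f g₃ → x ∈ g₁.vars → x ∈ g₃.vars → x ∈ g₂.vars

/-- The rewrite relation `⇝` on self-join-free conjunctive queries:
(1) delete a variable `x` from all atoms; (2) add a variable `y` to every atom
containing `x`, provided some atom contains both `x` and `y`; (3) delete an atom `g`,
provided `g` is exogenous or some other atom `g₀` satisfies `Var(g₀) ⊆ Var(g)`. -/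
inductive Rewrite : Finset (QAtom Rel Var) → Finset (QAtom Rel Var) → Prop where
  | delVar (q : Finset (QAtom Rel Var)) (x : Var) (hx : x ∈ qVars q) :
      Rewrite q (q.image fun g => ⟨g.rel, g.vars.erase x, g.endo⟩)
  | addVar (q : Finset (QAtom Rel Var)) (x y : Var)
      (h : ∃ g ∈ q, x ∈ g.vars ∧ y ∈ g.vars) :
      Rewrite q (q.image fun g => if x ∈ g.vars then ⟨g.rel, insert y g.vars, g.endo⟩ else g)
  | delAtom (q : Finset (QAtom Rel Var)) (g : QAtom Rel Var) (hg : g ∈ q)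
      (h : g.endo = false ∨ ∃ g₀ ∈ q, g₀ ≠ g ∧ g₀.vars ⊆ g.vars) :
      Rewrite q (q.erase g)

/-- The weakening relation `⊸`: dissociation adds to an exogenous atom a variable
occurring in an atom sharing a variable with it; domination re-marks an endogenous atom
`g` as exogenous provided some other endogenous atom `g₀` satisfies `Var(g₀) ⊆ Var(g)`. -/
inductive Weaken : Finset (QAtom Rel Var) → Finset (QAtom Rel Var) → Prop where
  | dissociate (q : Finset (QAtom Rel Var)) (g : QAtom Rel Var) (hg : g ∈ q)
      (hexo : g.endo = false) (v : Var)
      (h : ∃ g' ∈ q, g' ≠ g ∧ v ∈ g'.vars ∧ (g'.vars ∩ g.vars).Nonempty) :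
      Weaken q (insert ⟨g.rel, insert v g.vars, false⟩ (q.erase g))
  | dominate (q : Finset (QAtom Rel Var)) (g : QAtom Rel Var) (hg : g ∈ q)
      (hendo : g.endo = true)
      (h : ∃ g₀ ∈ q, g₀ ≠ g ∧ g₀.endo = true ∧ g₀.vars ⊆ g.vars) :
      Weaken q (insert ⟨g.rel, g.vars, false⟩ (q.erase g))

/-- `q` is weakly linear: some query obtained from `q` by a finite sequence of
weakenings is linear. -/
def weaklyLinear (q : Finset (QAtom Rel Var)) : Prop :=
  ∃ q', Relation.ReflTransGen Weaken q q' ∧ isLinear q'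

/-- `q` is final: it is not weakly linear, but every query obtained from it by a
single rewrite step is weakly linear. -/
def isFinal (q : Finset (QAtom Rel Var)) : Prop :=
  ¬ weaklyLinear q ∧ ∀ q', Rewrite q q' → weaklyLinear q'


/-- First measure component. -/
def Mq (q : Finset (QAtom Rel Var)) : ℕ := q.sum (fun g => (qVars q \ g.vars).card)

/-- Second measure component. -/
def Nq (q : Finset (QAtom Rel Var)) : ℕ := q.sum (fun g => 1 + g.vars.card)

lemma sjf_injOn {q : Finset (QAtom Rel Var)} (hq : selfJoinFree q)
    (φ : QAtom Rel Var → QAtom Rel Var) (hrel : ∀ g, (φ g).rel = g.rel) :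
    ∀ g₁ ∈ q, ∀ g₂ ∈ q, φ g₁ = φ g₂ → g₁ = g₂ := by
  intro g₁ h₁ g₂ h₂ h
  exact hq g₁ h₁ g₂ h₂ (by rw [← hrel g₁, ← hrel g₂, h])

lemma mem_qVars {q : Finset (QAtom Rel Var)} {a : Var} :
    a ∈ qVars q ↔ ∃ g ∈ q, a ∈ g.vars := by
  simp [qVars, Finset.mem_sup]

lemma measure_delVar {q : Finset (QAtom Rel Var)} (hq : selfJoinFree q)
    {x : Var} (hx : x ∈ qVars q) :
    Mq (q.image fun g => (⟨g.rel, g.vars.erase x, g.endo⟩ : QAtom Rel Var)) ≤ Mq q ∧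
    Nq (q.image fun g => (⟨g.rel, g.vars.erase x, g.endo⟩ : QAtom Rel Var)) < Nq q := by
  set φ : QAtom Rel Var → QAtom Rel Var := fun g => ⟨g.rel, g.vars.erase x, g.endo⟩ with hφ
  have hinj := sjf_injOn hq φ (fun g => rfl)
  have hsum : ∀ f : QAtom Rel Var → ℕ,
      (q.image φ).sum f = q.sum (fun g => f (φ g)) := fun f =>
    Finset.sum_image hinj
  have hQ : qVars (q.image φ) = (qVars q).erase x := by
    ext a
    simp only [mem_qVars, Finset.mem_erase, Finset.mem_image]
    constructor
    · rintro ⟨g', ⟨g, hg, rfl⟩, ha⟩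
      simp only [hφ, Finset.mem_erase] at ha
      exact ⟨ha.1, g, hg, ha.2⟩
    · rintro ⟨hane, g, hg, ha⟩
      exact ⟨φ g, ⟨g, hg, rfl⟩, by simp [hφ, Finset.mem_erase, hane, ha]⟩
  constructor
  · rw [Mq, hsum, hQ]
    apply Finset.sum_le_sum
    intro g hg
    have : (qVars q).erase x \ (φ g).vars = ((qVars q) \ g.vars).erase x := by
      ext a
      simp only [hφ, Finset.mem_sdiff, Finset.mem_erase]
      tauto
    rw [this]
    exact Finset.card_le_card (Finset.erase_subset _ _)
  · rw [Nq, hsum]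
    obtain ⟨g₀, hg₀, hxg₀⟩ := mem_qVars.mp hx
    apply Finset.sum_lt_sum
    · intro g hg
      exact Nat.add_le_add_left (Finset.card_le_card (Finset.erase_subset _ _)) 1
    · refine ⟨g₀, hg₀, ?_⟩
      exact Nat.add_lt_add_left (Finset.card_erase_lt_of_mem hxg₀) 1

lemma measure_addVar {q : Finset (QAtom Rel Var)} (hq : selfJoinFree q)
    {x y : Var} (h : ∃ g ∈ q, x ∈ g.vars ∧ y ∈ g.vars)
    (hne : (q.image fun g =>
        if x ∈ g.vars then (⟨g.rel, insert y g.vars, g.endo⟩ : QAtom Rel Var) else g) ≠ q) :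
    Mq (q.image fun g =>
        if x ∈ g.vars then (⟨g.rel, insert y g.vars, g.endo⟩ : QAtom Rel Var) else g) < Mq q := by
  set ψ : QAtom Rel Var → QAtom Rel Var :=
    fun g => if x ∈ g.vars then ⟨g.rel, insert y g.vars, g.endo⟩ else g with hψ
  have hrel : ∀ g, (ψ g).rel = g.rel := by
    intro g; simp only [hψ]; split <;> rfl
  have hvars : ∀ g, g.vars ⊆ (ψ g).vars := by
    intro g; simp only [hψ]; split
    · exact Finset.subset_insert _ _
    · exact subset_rfl
  have hvars' : ∀ g, (ψ g).vars ⊆ insert y g.vars := by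
    intro g; simp only [hψ]; split
    · exact subset_rfl
    · exact Finset.subset_insert _ _
  have hinj := sjf_injOn hq ψ hrel
  have hsum : ∀ f : QAtom Rel Var → ℕ,
      (q.image ψ).sum f = q.sum (fun g => f (ψ g)) := fun f =>
    Finset.sum_image hinj
  obtain ⟨ga, hga, hxga, hyga⟩ := h
  have hyQ : y ∈ qVars q := mem_qVars.mpr ⟨ga, hga, hyga⟩
  have hQ : qVars (q.image ψ) = qVars q := by
    apply Finset.Subset.antisymm
    · intro a ha
      obtain ⟨g', ⟨g, hg, rfl⟩, ha⟩ := by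
        simpa only [mem_qVars, Finset.mem_image] using ha
      have := hvars' g ha
      rcases Finset.mem_insert.mp this with rfl | hmem
      · exact hyQ
      · exact mem_qVars.mpr ⟨g, hg, hmem⟩
    · intro a ha
      obtain ⟨g, hg, ha⟩ := mem_qVars.mp ha
      exact mem_qVars.mpr ⟨ψ g, Finset.mem_image_of_mem _ hg, hvars g ha⟩
  -- witness atom: contains x but not y
  have hwit : ∃ g ∈ q, x ∈ g.vars ∧ y ∉ g.vars := by
    by_contra hcon
    push_neg at hcon
    apply hne
    have : ∀ g ∈ q, ψ g = g := by
      intro g hg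
      simp only [hψ]
      split
      · next hxg =>
        have hyg := hcon g hg hxg
        have : insert y g.vars = g.vars := Finset.insert_eq_self.mpr hyg
        rw [this]
      · rfl
    calc q.image ψ = q.image id := Finset.image_congr (fun g hg => this g hg)
      _ = q := Finset.image_id
  obtain ⟨gw, hgw, hxgw, hygw⟩ := hwit
  rw [Mq, Mq, hsum, hQ]
  apply Finset.sum_lt_sum
  · intro g hg
    exact Finset.card_le_card (Finset.sdiff_subset_sdiff subset_rfl (hvars g))
  · refine ⟨gw, hgw, ?_⟩
    apply Finset.card_lt_card
    constructor
    · exact Finset.sdiff_subset_sdiff subset_rfl (hvars gw)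
    · intro hsub
      have hy : y ∈ qVars q \ gw.vars := Finset.mem_sdiff.mpr ⟨hyQ, hygw⟩
      have := hsub hy
      rw [Finset.mem_sdiff] at this
      apply this.2
      have : (ψ gw).vars = insert y gw.vars := by simp [hψ, hxgw]
      rw [this]
      exact Finset.mem_insert_self _ _

lemma measure_delAtom {q : Finset (QAtom Rel Var)} {g : QAtom Rel Var} (hg : g ∈ q) :
    Mq (q.erase g) ≤ Mq q ∧ Nq (q.erase g) < Nq q := by
  constructor
  · have h1 : Mq (q.erase g) ≤ (q.erase g).sum (fun g' => (qVars q \ g'.vars).card) := by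
      apply Finset.sum_le_sum
      intro g' _
      apply Finset.card_le_card
      apply Finset.sdiff_subset_sdiff _ subset_rfl
      intro a ha
      obtain ⟨g'', hg'', ha⟩ := mem_qVars.mp ha
      exact mem_qVars.mpr ⟨g'', Finset.mem_of_mem_erase hg'', ha⟩
    refine h1.trans ?_
    exact Finset.sum_le_sum_of_subset (Finset.erase_subset _ _)
  · apply Finset.sum_lt_sum_of_subset (Finset.erase_subset g q) hg
      (Finset.notMem_erase _ _) (Nat.succ_le_iff.mp (Nat.le_add_right _ _))
    intro i _ _
    exact Nat.zero_le _

lemma rewrite_measure_lt {q q' : Finset (QAtom Rel Var)} (hq : selfJoinFree q)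
    (hr : Rewrite q q') (hne : q' ≠ q) :
    Mq q' < Mq q ∨ (Mq q' = Mq q ∧ Nq q' < Nq q) := by
  cases hr with
  | delVar x hx =>
    obtain ⟨hM, hN⟩ := measure_delVar hq hx
    rcases lt_or_eq_of_le hM with h | h
    · exact Or.inl h
    · exact Or.inr ⟨h, hN⟩
  | addVar x y h =>
    exact Or.inl (measure_addVar hq h hne)
  | delAtom g hg h =>
    obtain ⟨hM, hN⟩ := measure_delAtom hg
    rcases lt_or_eq_of_le hM with h | h
    · exact Or.inl h
    · exact Or.inr ⟨h, hN⟩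

/-- The rewrite relation on self-join-free Boolean conjunctive queries
terminates: there is no infinite sequence `q0 ⇝ q1 ⇝ q2 ⇝ …` of rewrite steps in which
each step produces a query different from its predecessor. -/
theorem statement9 :
    ¬ ∃ f : ℕ → Finset (QAtom Rel Var),
      (∀ n, selfJoinFree (f n)) ∧
      (∀ n, Rewrite (f n) (f (n + 1)) ∧ f (n + 1) ≠ f n) := by
  rintro ⟨f, hsjf, hstep⟩
  let g : ℕ → ℕ ×ₗ ℕ := fun n => toLex (Mq (f n), Nq (f n))
  have hdec : ∀ n, g (n + 1) < g n := by
    intro n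
    have := rewrite_measure_lt (hsjf n) (hstep n).1 (hstep n).2
    rcases this with h | ⟨h1, h2⟩
    · exact Prod.Lex.lt_iff.mpr (Or.inl h)
    · exact Prod.Lex.lt_iff.mpr (Or.inr ⟨h1, h2⟩)
  obtain ⟨a, ⟨n, rfl⟩, hmin⟩ :=
    (wellFounded_lt (α := ℕ ×ₗ ℕ)).has_min (Set.range g) ⟨g 0, 0, rfl⟩
  exact hmin (g (n + 1)) ⟨n + 1, rfl⟩ (hdec n)
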